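/- arXiv:0802.1306 — 2 statements merged into one kernel-verified Lean document; each statement's English description precedes it below -/
import Mathlib

section
/- Let N be a finite set, Υ : N × N → ℝ a matrix, and ε ∈ [0,1]. For a nonempty U ⊆ N define the cohesion Υ(U) = min_{i,j ∈ U} max(Υ_{ij}, Υ_{ji}), and call U an ε-community if Υ(U) ≥ ε. Order ε-communities by U ⊑ V iff U ⊆ V and Υ(U) ≤ Υ(V). Then ⊑ is a partial order on the set of nonempty ε-communities, and every nonempty ⊑-directed family D of ε-communities has a least upper bound, namely its set-theoretic union ⋃D (which is itself an ε-community with Υ(⋃D) = Υ(U) for every U ∈ D). -/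
open Finset

/-- The cohesion `Υ(U) = min_{i,j ∈ U} max(Υ_{ij}, Υ_{ji})` of a nonempty finite set
of nodes `U` (junk value `0` for the empty set). -/
noncomputable def coh {N : Type*} [DecidableEq N] (Υ : N × N → ℝ) (U : Finset N) : ℝ :=
  if h : (U ×ˢ U).Nonempty then
    (U ×ˢ U).inf' h (fun p => max (Υ (p.1, p.2)) (Υ (p.2, p.1)))
  else 0

lemma coh_anti {N : Type*} [DecidableEq N] (Υ : N × N → ℝ) {U V : Finset N}
    (hU : U.Nonempty) (h : U ⊆ V) : coh Υ V ≤ coh Υ U := by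
  have hUU : (U ×ˢ U).Nonempty := hU.product hU
  have hVV : (V ×ˢ V).Nonempty := hUU.mono (product_subset_product h h)
  simp only [coh, dif_pos hUU, dif_pos hVV]
  exact le_inf' hUU _ fun b hb => inf'_le _ (product_subset_product h h hb)

lemma coh_le {N : Type*} [DecidableEq N] (Υ : N × N → ℝ) {U : Finset N} {p : N × N}
    (hp : p ∈ U ×ˢ U) : coh Υ U ≤ max (Υ (p.1, p.2)) (Υ (p.2, p.1)) := by
  have hUU : (U ×ˢ U).Nonempty := ⟨p, hp⟩
  simp only [coh, dif_pos hUU]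
  exact inf'_le _ hp

lemma le_coh {N : Type*} [DecidableEq N] (Υ : N × N → ℝ) {U : Finset N} {c : ℝ}
    (hU : U.Nonempty) (h : ∀ p ∈ U ×ˢ U, c ≤ max (Υ (p.1, p.2)) (Υ (p.2, p.1))) :
    c ≤ coh Υ U := by
  have hUU : (U ×ˢ U).Nonempty := hU.product hU
  simp only [coh, dif_pos hUU]
  exact le_inf' hUU _ h

/-- The relation `U ⊑ V ⇔ U ⊆ V ∧ Υ(U) ≤ Υ(V)` is a partial order on nonempty
`ε`-communities, and every directed family of `ε`-communities has a least upper
bound, namely its union, whose cohesion agrees with that of every member. -/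
theorem community_dcpo {N : Type*} [Fintype N] [DecidableEq N] (Υ : N × N → ℝ)
    (ε : ℝ) (hε : ε ∈ Set.Icc (0 : ℝ) 1) :
    -- reflexivity
    (∀ U : Finset N, U.Nonempty → ε ≤ coh Υ U → U ⊆ U ∧ coh Υ U ≤ coh Υ U) ∧
    -- antisymmetry
    (∀ U V : Finset N, U.Nonempty → ε ≤ coh Υ U → V.Nonempty → ε ≤ coh Υ V →
      (U ⊆ V ∧ coh Υ U ≤ coh Υ V) → (V ⊆ U ∧ coh Υ V ≤ coh Υ U) → U = V) ∧
    -- transitivity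
    (∀ U V W : Finset N, U.Nonempty → ε ≤ coh Υ U → V.Nonempty → ε ≤ coh Υ V →
      W.Nonempty → ε ≤ coh Υ W →
      (U ⊆ V ∧ coh Υ U ≤ coh Υ V) → (V ⊆ W ∧ coh Υ V ≤ coh Υ W) →
      U ⊆ W ∧ coh Υ U ≤ coh Υ W) ∧
    -- directed families have least upper bounds, given by unions
    (∀ D : Finset (Finset N), D.Nonempty →
      (∀ U ∈ D, U.Nonempty ∧ ε ≤ coh Υ U) →
      (∀ U ∈ D, ∀ V ∈ D, ∃ W ∈ D,
        (U ⊆ W ∧ coh Υ U ≤ coh Υ W) ∧ (V ⊆ W ∧ coh Υ V ≤ coh Υ W)) →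
      -- the union is a nonempty ε-community
      (D.sup id).Nonempty ∧ ε ≤ coh Υ (D.sup id) ∧
      -- it is an upper bound
      (∀ U ∈ D, U ⊆ D.sup id ∧ coh Υ U ≤ coh Υ (D.sup id)) ∧
      -- it is the least upper bound among ε-communities
      (∀ V : Finset N, V.Nonempty → ε ≤ coh Υ V →
        (∀ U ∈ D, U ⊆ V ∧ coh Υ U ≤ coh Υ V) →
        D.sup id ⊆ V ∧ coh Υ (D.sup id) ≤ coh Υ V) ∧
      -- its cohesion agrees with that of every member
      (∀ U ∈ D, coh Υ (D.sup id) = coh Υ U)) := by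
  refine ⟨fun U _ _ => ⟨subset_rfl, le_rfl⟩,
    fun U V _ _ _ _ h1 h2 => subset_antisymm h1.1 h2.1,
    fun U V W _ _ _ _ _ _ h1 h2 => ⟨h1.1.trans h2.1, h1.2.trans h2.2⟩,
    fun D hD hmem hdir => ?_⟩
  -- all members of D have equal cohesion
  have hcoh_eq : ∀ U ∈ D, ∀ V ∈ D, coh Υ U = coh Υ V := by
    intro U hU V hV
    obtain ⟨W, hW, ⟨hUW, hUWc⟩, ⟨hVW, hVWc⟩⟩ := hdir U hU V hV
    have h1 : coh Υ U = coh Υ W :=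
      le_antisymm hUWc (coh_anti Υ (hmem U hU).1 hUW)
    have h2 : coh Υ V = coh Υ W :=
      le_antisymm hVWc (coh_anti Υ (hmem V hV).1 hVW)
    rw [h1, h2]
  obtain ⟨U₀, hU₀⟩ := hD
  have hsub : ∀ U ∈ D, U ⊆ D.sup id := fun U hU => le_sup (f := id) hU
  have hSne : (D.sup id).Nonempty := ((hmem U₀ hU₀).1).mono (hsub U₀ hU₀)
  -- key: for every pair in the union, cohesion of U₀ lower-bounds the max
  have hkey : ∀ p ∈ (D.sup id) ×ˢ (D.sup id),
      coh Υ U₀ ≤ max (Υ (p.1, p.2)) (Υ (p.2, p.1)) := by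
    intro p hp
    rw [mem_product] at hp
    obtain ⟨U, hU, hpU⟩ := mem_sup.mp hp.1
    obtain ⟨V, hV, hpV⟩ := mem_sup.mp hp.2
    obtain ⟨W, hW, ⟨hUW, _⟩, ⟨hVW, _⟩⟩ := hdir U hU V hV
    have hpW : p ∈ W ×ˢ W := mem_product.mpr ⟨hUW hpU, hVW hpV⟩
    calc coh Υ U₀ = coh Υ W := hcoh_eq U₀ hU₀ W hW
      _ ≤ _ := coh_le Υ hpW
  have hSc : coh Υ U₀ ≤ coh Υ (D.sup id) := le_coh Υ hSne hkey
  have hSeq : ∀ U ∈ D, coh Υ (D.sup id) = coh Υ U := by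
    intro U hU
    refine le_antisymm (coh_anti Υ (hmem U hU).1 (hsub U hU)) ?_
    rw [← hcoh_eq U₀ hU₀ U hU] at *
    exact hSc
  refine ⟨hSne, (hmem U₀ hU₀).2.trans hSc, fun U hU => ⟨hsub U hU, (hSeq U hU).ge⟩,
    fun V hVne hVc hub => ?_, hSeq⟩
  have hsubV : D.sup id ⊆ V := Finset.sup_le fun U hU => (hub U hU).1
  exact ⟨hsubV, (hSeq U₀ hU₀).le.trans (hub U₀ hU₀).2⟩
end

section
/- Let N be a finite nonempty set of cardinality n, M a row-stochastic matrix on N, d ∈ (0,1), and P the matrix with all entries P_{ij} = 1/n. Then the teleportation dynamics M^P = d·M + (1−d)·P is row-stochastic with all entries strictly positive, and it has a unique stationary distribution: there is exactly one probability vector r with r_j = Σ_i r_i M^P_{ij} for all j. -/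
open Finset

lemma tele_key {N : Type*} [Fintype N] (M : N → N → ℝ)
    (hM0 : ∀ i j, 0 ≤ M i j) (hM1 : ∀ i, ∑ j, M i j = 1)
    {d : ℝ} (hd0 : 0 < d) (hd1 : d < 1) (x : N → ℝ)
    (hx : ∀ j, x j = d * ∑ i, M i j * x i) : x = 0 := by
  have h1 : ∑ j, |x j| ≤ d * ∑ i, |x i| := by
    calc ∑ j, |x j| = ∑ j, |d * ∑ i, M i j * x i| :=
          Finset.sum_congr rfl fun j _ => by rw [← hx j]
      _ ≤ ∑ j, d * ∑ i, M i j * |x i| := by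
          refine Finset.sum_le_sum fun j _ => ?_
          rw [abs_mul, abs_of_pos hd0]
          refine mul_le_mul_of_nonneg_left ?_ hd0.le
          refine (Finset.abs_sum_le_sum_abs _ _).trans ?_
          exact Finset.sum_le_sum fun i _ => by
            rw [abs_mul, abs_of_nonneg (hM0 i j)]
      _ = d * ∑ i, (∑ j, M i j) * |x i| := by
          rw [← Finset.mul_sum, Finset.sum_comm]
          congr 1
          exact Finset.sum_congr rfl fun i _ => (Finset.sum_mul _ _ _).symm
      _ = d * ∑ i, |x i| := by
          congr 1
          exact Finset.sum_congr rfl fun i _ => by rw [hM1 i, one_mul]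
  have h2 : 0 ≤ ∑ i, |x i| := Finset.sum_nonneg fun i _ => abs_nonneg _
  have h3 : ∑ i, |x i| = 0 := by nlinarith
  funext j
  have h4 := (Finset.sum_eq_zero_iff_of_nonneg fun i _ => abs_nonneg (x i)).mp h3 j
    (Finset.mem_univ j)
  simpa using abs_eq_zero.mp h4

lemma tele_expand {N : Type*} [Fintype N] (M : N → N → ℝ) (d c : ℝ) (y : N → ℝ) (j : N) :
    ∑ i, y i * (d * M i j + c) = d * (∑ i, M i j * y i) + c * ∑ i, y i := by
  simp only [mul_add, Finset.sum_add_distrib, Finset.mul_sum]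
  congr 1
  · exact Finset.sum_congr rfl fun i _ => by ring
  · exact Finset.sum_congr rfl fun i _ => by ring

/-- The teleportation dynamics `M^P = d·M + (1−d)·P`, where `P` is the uniform
matrix with entries `1/n`, is row-stochastic with strictly positive entries, and
has a unique stationary distribution. -/
theorem teleportation_unique_stationary {N : Type*} [Fintype N] [Nonempty N]
    (M : N → N → ℝ)
    (hM0 : ∀ i j, 0 ≤ M i j) (hM1 : ∀ i, ∑ j, M i j = 1)
    (d : ℝ) (hd : d ∈ Set.Ioo (0 : ℝ) 1) :
    (∀ i j, 0 < d * M i j + (1 - d) * (1 / (Fintype.card N : ℝ))) ∧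
    (∀ i, ∑ j, (d * M i j + (1 - d) * (1 / (Fintype.card N : ℝ))) = 1) ∧
    (∃! r : N → ℝ, (∀ i, 0 ≤ r i) ∧ (∑ i, r i = 1) ∧
      ∀ j, r j = ∑ i, r i * (d * M i j + (1 - d) * (1 / (Fintype.card N : ℝ)))) := by
  classical
  obtain ⟨hd0, hd1⟩ := hd
  have hcard : 0 < Fintype.card N := Fintype.card_pos
  have hn0 : (0 : ℝ) < (Fintype.card N : ℝ) := by exact_mod_cast hcard
  set c : ℝ := (1 - d) * (1 / (Fintype.card N : ℝ)) with hc_def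
  have hc0 : 0 < c := mul_pos (by linarith) (by positivity)
  refine ⟨fun i j => ?_, fun i => ?_, ?_⟩
  · have := hM0 i j
    nlinarith
  · rw [Finset.sum_add_distrib, ← Finset.mul_sum, hM1, Finset.sum_const, card_univ,
      nsmul_eq_mul, hc_def]
    field_simp
    ring
  -- Existence and uniqueness
  · let f : (N → ℝ) →ₗ[ℝ] (N → ℝ) :=
      { toFun := fun x j => x j - d * ∑ i, M i j * x i
        map_add' := by
          intro x y
          funext j
          simp only [Pi.add_apply, mul_add, Finset.sum_add_distrib]
          ring
        map_smul' := by
          intro a x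
          funext j
          simp only [Pi.smul_apply, smul_eq_mul, RingHom.id_apply, mul_left_comm,
            ← Finset.mul_sum]
          ring }
    have hker : ∀ x, f x = 0 → x = 0 := by
      intro x hxf
      refine tele_key M hM0 hM1 hd0 hd1 x fun j => ?_
      have h := congrFun hxf j
      simp only [f, LinearMap.coe_mk, AddHom.coe_mk, Pi.zero_apply] at h
      linarith
    have hinj : Function.Injective f :=
      LinearMap.ker_eq_bot.mp (LinearMap.ker_eq_bot'.mpr hker)
    obtain ⟨r, hr⟩ := (LinearMap.injective_iff_surjective).mp hinj (fun _ => c)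
    have hreq : ∀ j, r j = d * (∑ i, M i j * r i) + c := by
      intro j
      have h := congrFun hr j
      simp only [f, LinearMap.coe_mk, AddHom.coe_mk] at h
      linarith
    have hsum : ∑ i, r i = 1 := by
      have h : ∑ j, r j = d * ∑ i, r i + (1 - d) := by
        calc ∑ j, r j = ∑ j, (d * (∑ i, M i j * r i) + c) :=
              Finset.sum_congr rfl fun j _ => hreq j
          _ = d * (∑ j, ∑ i, M i j * r i) + (Fintype.card N : ℝ) * c := by
              rw [Finset.sum_add_distrib, ← Finset.mul_sum, Finset.sum_const, card_univ,
                nsmul_eq_mul]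
          _ = d * ∑ i, r i + (1 - d) := by
              rw [Finset.sum_comm]
              congr 1
              · congr 1
                calc ∑ i, ∑ j, M i j * r i = ∑ i, (∑ j, M i j) * r i :=
                      Finset.sum_congr rfl fun i _ => (Finset.sum_mul _ _ _).symm
                  _ = ∑ i, r i := Finset.sum_congr rfl fun i _ => by rw [hM1, one_mul]
              · rw [hc_def]
                field_simp
      have h2 : (1 - d) * (∑ i, r i - 1) = 0 := by linarith
      have h3 : (1 : ℝ) - d ≠ 0 := by linarith
      have := (mul_eq_zero.mp h2).resolve_left h3
      linarith
    have habs_le : ∑ i, |r i| ≤ 1 := by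
      have h : ∑ j, |r j| ≤ d * ∑ i, |r i| + (1 - d) := by
        calc ∑ j, |r j| = ∑ j, |d * (∑ i, M i j * r i) + c| :=
              Finset.sum_congr rfl fun j _ => by rw [← hreq j]
          _ ≤ ∑ j, (d * ∑ i, M i j * |r i| + c) := by
              refine Finset.sum_le_sum fun j _ => ?_
              refine (abs_add_le _ _).trans ?_
              rw [abs_mul, abs_of_pos hd0, abs_of_pos hc0]
              gcongr
              refine (Finset.abs_sum_le_sum_abs _ _).trans ?_
              exact Finset.sum_le_sum fun i _ => by
                rw [abs_mul, abs_of_nonneg (hM0 i j)]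
          _ = d * (∑ j, ∑ i, M i j * |r i|) + (Fintype.card N : ℝ) * c := by
              rw [Finset.sum_add_distrib, ← Finset.mul_sum, Finset.sum_const, card_univ,
                nsmul_eq_mul]
          _ = d * ∑ i, |r i| + (1 - d) := by
              rw [Finset.sum_comm]
              congr 1
              · congr 1
                calc ∑ i, ∑ j, M i j * |r i| = ∑ i, (∑ j, M i j) * |r i| :=
                      Finset.sum_congr rfl fun i _ => (Finset.sum_mul _ _ _).symm
                  _ = ∑ i, |r i| := Finset.sum_congr rfl fun i _ => by rw [hM1, one_mul]
              · rw [hc_def]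
                field_simp
      nlinarith
    have habs_ge : 1 ≤ ∑ i, |r i| := by
      rw [← hsum]
      exact Finset.sum_le_sum fun i _ => le_abs_self _
    have habs_eq : ∑ i, |r i| = 1 := le_antisymm habs_le habs_ge
    have hnonneg : ∀ i, 0 ≤ r i := by
      intro i
      have h0 : ∑ i, (|r i| - r i) = 0 := by
        rw [Finset.sum_sub_distrib, habs_eq, hsum, sub_self]
      have h1 := (Finset.sum_eq_zero_iff_of_nonneg fun i _ =>
        sub_nonneg.mpr (le_abs_self (r i))).mp h0 i (Finset.mem_univ i)
      have h2 : |r i| = r i := by linarith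
      rw [← h2]
      exact abs_nonneg _
    have hstat : ∀ j, r j = ∑ i, r i * (d * M i j + c) := by
      intro j
      rw [tele_expand, hsum, mul_one]
      exact hreq j
    refine ⟨r, ⟨hnonneg, hsum, hstat⟩, ?_⟩
    rintro y ⟨hy0, hy1, hy2⟩
    have hyeq : ∀ j, y j = d * (∑ i, M i j * y i) + c := by
      intro j
      rw [hy2 j, tele_expand, hy1, mul_one]
    have hzero : (fun i => y i - r i) = 0 := by
      refine tele_key M hM0 hM1 hd0 hd1 _ fun j => ?_
      have h1 := hreq j
      have h2 := hyeq j
      have h3 : ∑ i, M i j * (y i - r i) = (∑ i, M i j * y i) - ∑ i, M i j * r i := by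
        rw [← Finset.sum_sub_distrib]
        exact Finset.sum_congr rfl fun i _ => by ring
      rw [h3]
      linarith
    funext i
    have := congrFun hzero i
    simpa [sub_eq_zero] using this
end
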